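/- Let $R$ be a commutative ring and $R^{s_1}, \ldots, R^{s_n}$ subrings with elements $x_{s_i} \in R$ such that $R = R^{s_i} \oplus x_{s_i} R^{s_i}$ as left $R^{s_i}$-modules for each $i$. Then the iterated tensor product $\theta_{s_1} \cdots \theta_{s_n} = R \otimes_{R^{s_1}} R \otimes_{R^{s_2}} \cdots \otimes_{R^{s_n}} R$ is a free left $R$-module with basis $\{1 \otimes x_{s_1}^{i_1} \otimes \cdots \otimes x_{s_n}^{i_n}\}_{(i_1,\ldots,i_n) \in \{0,1\}^n}$, where $x_s^0 = 1$ and $x_s^1 = x_s$. -/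

import Mathlib

open scoped TensorProduct

/-- A bundled `R`-module. -/
structure PMod (R : Type) [CommRing R] : Type 1 where
  carrier : Type
  [acg : AddCommGroup carrier]
  [mod : Module R carrier]

attribute [instance] PMod.acg PMod.mod

/-- The iterated tensor product `R ⊗_{S₁} R ⊗_{S₂} ⋯ ⊗_{Sₙ} R` (with `n + 1`
factors of `R`), as a left `R`-module via the leftmost factor. -/
noncomputable def Theta (R : Type) [CommRing R] : List (Subring R) → PMod R
  | [] => { carrier := R }
  | S :: L => { carrier := TensorProduct S R (Theta R L).carrier }

/-- The candidate basis element `1 ⊗ x₁^{i₁} ⊗ ⋯ ⊗ xₙ^{iₙ}` of the iterated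
tensor product, for a list of pairs (subring, element) and a list of boolean
exponents. -/
noncomputable def elt (R : Type) [CommRing R] :
    (L : List (Subring R × R)) → List Bool → (Theta R (L.map Prod.fst)).carrier
  | [], _ => (1 : R)
  | p :: L', c => (1 : R) ⊗ₜ ((if c.headI then p.2 else 1) • elt R L' c.tail)

/-- If `R = S ⊕ xS` as `S`-modules, then `{1, x}` is an `S`-basis of `R`. -/
lemma basisBool (R : Type) [CommRing R] (S : Subring R) (x : R)
    (hdec : ∀ p : R, ∃ p₁ ∈ S, ∃ p₂ ∈ S, p = p₁ + x * p₂)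
    (huniq : ∀ p₁ p₂ : R, p₁ ∈ S → p₂ ∈ S → p₁ + x * p₂ = 0 → p₁ = 0 ∧ p₂ = 0) :
    ∃ C : Module.Basis Bool ↥S R, ∀ b, C b = if b then x else 1 := by
  set v : Bool → R := fun b => if b then x else 1 with hv
  have li : LinearIndependent ↥S v := by
    rw [Fintype.linearIndependent_iff]
    intro g hg
    rw [Fintype.sum_bool] at hg
    simp only [hv, if_true, if_false] at hg
    have hg' : (g false : R) + x * (g true : R) = 0 := by
      rw [← hg]
      simp [Subring.smul_def, smul_eq_mul, mul_comm]
      ring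
    obtain ⟨h1, h2⟩ := huniq _ _ (g false).2 (g true).2 hg'
    intro b
    cases b <;> [exact Subtype.ext h1; exact Subtype.ext h2]
  have sp : ⊤ ≤ Submodule.span ↥S (Set.range v) := by
    intro r _
    obtain ⟨p₁, h₁, p₂, h₂, rfl⟩ := hdec r
    have e1 : p₁ = (⟨p₁, h₁⟩ : ↥S) • v false := by simp [hv, Subring.smul_def]
    have e2 : x * p₂ = (⟨p₂, h₂⟩ : ↥S) • v true := by
      simp [hv, Subring.smul_def, mul_comm]
    rw [e1, e2]
    exact Submodule.add_mem _
      (Submodule.smul_mem _ _ (Submodule.subset_span ⟨false, rfl⟩))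
      (Submodule.smul_mem _ _ (Submodule.subset_span ⟨true, rfl⟩))
  exact ⟨Module.Basis.mk li sp, fun b => by rw [Module.Basis.mk_apply]⟩

/-- If `R = Sᵢ ⊕ xᵢSᵢ` as `Sᵢ`-modules for each `i`, then
`R ⊗_{S₁} R ⊗ ⋯ ⊗_{Sₙ} R` is a free left `R`-module with basis
`{1 ⊗ x₁^{i₁} ⊗ ⋯ ⊗ xₙ^{iₙ}}` over all `(i₁,…,iₙ) ∈ {0,1}ⁿ`. -/
theorem stmt11
    (R : Type) [CommRing R] (L : List (Subring R × R))
    (hdec : ∀ sx ∈ L, ∀ p : R, ∃ p₁ ∈ sx.1, ∃ p₂ ∈ sx.1, p = p₁ + sx.2 * p₂)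
    (huniq : ∀ sx ∈ L, ∀ p₁ p₂ : R, p₁ ∈ sx.1 → p₂ ∈ sx.1 →
      p₁ + sx.2 * p₂ = 0 → p₁ = 0 ∧ p₂ = 0) :
    ∃ Bs : Module.Basis (Fin L.length → Bool) R (Theta R (L.map Prod.fst)).carrier,
      ∀ f, Bs f = elt R L (List.ofFn f) := by
  induction L with
  | nil =>
      refine ⟨Module.Basis.singleton (Fin 0 → Bool) R, fun f => ?_⟩
      show (Module.Basis.singleton (Fin 0 → Bool) R) f = elt R [] (List.ofFn f)
      rw [Module.Basis.singleton_apply]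
      rfl
  | cons p L' ih =>
      obtain ⟨Bprev, hBprev⟩ := ih
        (fun sx h => hdec sx (List.mem_cons_of_mem _ h))
        (fun sx h => huniq sx (List.mem_cons_of_mem _ h))
      obtain ⟨C, hC⟩ := basisBool R p.1 p.2
        (hdec p (List.mem_cons_self))
        (huniq p (List.mem_cons_self))
      set M := (Theta R (L'.map Prod.fst)).carrier
      let D : Module.Basis (Bool × (Fin L'.length → Bool)) ↥p.1 M := C.smulTower Bprev
      let E : Module.Basis (Bool × (Fin L'.length → Bool)) R (TensorProduct ↥p.1 R M) :=
        D.baseChange R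
      refine ⟨E.reindex (Fin.consEquiv (fun _ => Bool)),
        fun f : Fin (L'.length + 1) → Bool => ?_⟩
      show (E.reindex (Fin.consEquiv (fun _ => Bool))) f =
        (1 : R) ⊗ₜ ((if (List.ofFn f).headI then p.2 else 1) • elt R L' (List.ofFn f).tail)
      rw [Module.Basis.reindex_apply]
      have hsymm : (Fin.consEquiv (fun _ : Fin (L'.length + 1) => Bool)).symm f
          = (f 0, fun i => f i.succ) := rfl
      rw [hsymm]
      have : E (f 0, fun i => f i.succ) = (1 : R) ⊗ₜ (D (f 0, fun i => f i.succ)) :=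
        Module.Basis.baseChange_apply ..
      rw [this]
      have hD : D (f 0, fun i => f i.succ)
          = (if f 0 then p.2 else 1) • Bprev (fun i => f i.succ) := by
        rw [Module.Basis.smulTower_apply, hC]
      rw [hD, hBprev]
      simp [List.ofFn_succ]
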